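/- Let K = ℚ(√14) with ring of integers O_K = ℤ[√14], and let 𝔭 be a prime ideal of O_K whose absolute norm N𝔭 is a prime number p with p ≡ 1 (mod 8) or p ≡ 7 (mod 8). Then for no real number c > 0 is the weighted norm f_{𝔭,c} a Euclidean function on O_K; that is, the Euclidean window w(𝔭) is empty. -/

import Mathlib

open scoped Classical

open NumberField IsDedekindDomain
open scoped nonZeroDivisors

/-- The exponent `v_𝔭(α)` of the prime `v` in the factorization of the fractional
ideal `α·𝓞 K`, for `α ≠ 0`; by convention `adicVal v 0 = 0`. -/
noncomputable def adicVal {K : Type*} [Field K] [NumberField K]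
    (v : HeightOneSpectrum (𝓞 K)) (α : K) : ℤ :=
  if h : α = 0 then 0
  else -Multiplicative.toAdd (WithZero.unzero ((Valuation.ne_zero_iff (v.valuation K)).mpr h))

/-- The weighted norm `f_{𝔭,c}(α) = |N(α)| · (c/N𝔭)^{v_𝔭(α)}`, with `f_{𝔭,c}(0) = 0`. -/
noncomputable def weightedNorm {K : Type*} [Field K] [NumberField K]
    (v : HeightOneSpectrum (𝓞 K)) (c : ℝ) (α : K) : ℝ :=
  if α = 0 then 0
  else |(Algebra.norm ℚ α : ℚ)| * (c / (Ideal.absNorm v.asIdeal : ℝ)) ^ (adicVal v α)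

/-- `f` is a Euclidean function on `𝓞 K`. -/
def IsEuclideanFunction {K : Type*} [Field K] [NumberField K] (f : K → ℝ) : Prop :=
  ∀ a b : 𝓞 K, b ≠ 0 → ∃ q : 𝓞 K, f ((a : K) - b * q) < f (b : K)

section Aux
variable {K : Type*} [Field K] [NumberField K]

lemma dvd_iff_le_adicVal (v : HeightOneSpectrum (𝓞 K)) (x : 𝓞 K) (hx : x ≠ 0) (n : ℕ) :
    v.asIdeal ^ n ∣ Ideal.span {x} ↔ (n : ℤ) ≤ adicVal v (x : K) := by
  have hxK : (x : K) ≠ 0 := by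
    simpa using hx
  have hval : v.valuation K ((x : K)) = v.intValuation x := by
    simpa using v.valuation_of_algebraMap (K := K) x
  rw [← v.intValuation_le_pow_iff_dvd x n, ← hval]
  rw [adicVal, dif_neg hxK]
  set u := WithZero.unzero ((Valuation.ne_zero_iff (v.valuation K)).mpr hxK) with hu
  have : v.valuation K (x : K) = (u : WithZero (Multiplicative ℤ)) := (WithZero.coe_unzero _).symm
  rw [this]
  rw [show WithZero.exp (-(n : ℤ)) = ((Multiplicative.ofAdd (-(n : ℤ)) : Multiplicative ℤ) : WithZero (Multiplicative ℤ)) from rfl]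
  rw [WithZero.coe_le_coe]
  constructor
  · intro h
    have := Multiplicative.toAdd_le.mpr h
    simp at this
    omega
  · intro h
    rw [← Multiplicative.toAdd_le]
    simp
    omega

end Aux
section Aux2
variable {K : Type*} [Field K] [NumberField K]

lemma adicVal_eq_of_dvd (v : HeightOneSpectrum (𝓞 K)) (x : 𝓞 K) (hx : x ≠ 0) (n : ℕ)
    (h1 : v.asIdeal ^ n ∣ Ideal.span {x}) (h2 : ¬ v.asIdeal ^ (n + 1) ∣ Ideal.span {x}) :
    adicVal v (x : K) = n := by
  have a1 := (dvd_iff_le_adicVal v x hx n).mp h1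
  have a2 : ¬ ((n + 1 : ℕ) : ℤ) ≤ adicVal v (x : K) := fun h =>
    h2 ((dvd_iff_le_adicVal v x hx (n + 1)).mpr h)
  push_cast at a2
  omega

lemma exists_adicVal_nat (v : HeightOneSpectrum (𝓞 K)) (x : 𝓞 K) (hx : x ≠ 0) :
    ∃ n : ℕ, adicVal v (x : K) = n ∧ v.asIdeal ^ n ∣ Ideal.span {x} ∧
      ¬ v.asIdeal ^ (n + 1) ∣ Ideal.span {x} := by
  have h0 : (0 : ℤ) ≤ adicVal v (x : K) := by
    simpa using (dvd_iff_le_adicVal v x hx 0).mp (by simp)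
  -- boundedness
  have hspan : Ideal.span {x} ≠ ⊥ := by
    simpa [Ideal.span_singleton_eq_bot] using hx
  have habs : Ideal.absNorm (Ideal.span {x}) ≠ 0 := by
    simpa [Ideal.absNorm_eq_zero_iff] using hspan
  have hp2 : 2 ≤ Ideal.absNorm v.asIdeal := by
    rcases Nat.lt_or_ge (Ideal.absNorm v.asIdeal) 2 with h | h
    · interval_cases h' : Ideal.absNorm v.asIdeal
      · exact absurd (Ideal.absNorm_eq_zero_iff.mp h') v.ne_bot
      · exact absurd (Ideal.absNorm_eq_one_iff.mp h') v.isPrime.ne_top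
    · exact h
  set m := Ideal.absNorm (Ideal.span {x}) with hm
  have hbound : ¬ ((m + 1 : ℕ) : ℤ) ≤ adicVal v (x : K) := by
    intro hle
    have hdvd := (dvd_iff_le_adicVal v x hx (m + 1)).mpr hle
    have : Ideal.absNorm (v.asIdeal ^ (m + 1)) ∣ m := map_dvd _ hdvd
    rw [map_pow] at this
    have hlt : m < Ideal.absNorm v.asIdeal ^ (m + 1) := by
      calc m < 2 ^ (m + 1) := by
              have := Nat.lt_two_pow_self (n := m)
              have : (2:ℕ) ^ m ≤ 2 ^ (m+1) := Nat.pow_le_pow_right (by norm_num) (by omega)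
              omega
        _ ≤ Ideal.absNorm v.asIdeal ^ (m + 1) := Nat.pow_le_pow_left hp2 _
    exact absurd (Nat.le_of_dvd (Nat.pos_of_ne_zero habs) this) (not_le_of_gt hlt)
  lift adicVal v (x : K) to ℕ using h0 with N hN
  refine ⟨N, rfl, (dvd_iff_le_adicVal v x hx _).mpr (by rw [← hN]), ?_⟩
  intro h
  have h1 := (dvd_iff_le_adicVal v x hx _).mp h
  rw [← hN] at h1
  push_cast at h1
  omega

lemma weightedNorm_coe (v : HeightOneSpectrum (𝓞 K)) (c : ℝ) (x : 𝓞 K) (hx : x ≠ 0)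
    (n : ℕ) (hn : adicVal v (x : K) = n) :
    weightedNorm v c (x : K) =
      (Ideal.absNorm (Ideal.span {x}) : ℝ) * (c / (Ideal.absNorm v.asIdeal : ℝ)) ^ n := by
  have hxK : (x : K) ≠ 0 := by simpa using hx
  rw [weightedNorm, if_neg hxK, hn]
  have key : |(Algebra.norm ℚ (x : K) : ℚ)| = ((Ideal.absNorm (Ideal.span {x}) : ℚ)) := by
    rw [Ideal.absNorm_span_singleton, ← Algebra.coe_norm_int, Nat.cast_natAbs]
    exact Int.cast_abs.symm
  rw [key, zpow_natCast]
  push_cast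
  ring

end Aux2

section Quad
variable {K : Type*} [Field K] [NumberField K]

lemma no_rat_sqrt14 (q : ℚ) : q ^ 2 ≠ 14 := by
  intro h
  have hint : IsIntegral ℤ q := ⟨Polynomial.X ^ 2 - Polynomial.C 14, by
    apply Polynomial.monic_X_pow_sub_C <;> norm_num, by simp [h]⟩
  obtain ⟨z, rfl⟩ := IsIntegrallyClosed.isIntegral_iff.mp hint
  have hz' : z ^ 2 = 14 := by
    have h2 : ((z ^ 2 : ℤ) : ℚ) = ((14 : ℤ) : ℚ) := by push_cast; exact h
    exact_mod_cast h2
  have h1 : z.natAbs ^ 2 = 14 := by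
    have := congrArg Int.natAbs hz'
    simpa [Int.natAbs_pow] using this
  have : z.natAbs ≤ 14 := by nlinarith [sq_nonneg z.natAbs]
  interval_cases h : z.natAbs <;> omega

variable (s : K) (hs : s ^ 2 = 14) (hdeg : Module.finrank ℚ K = 2)

include hs in
lemma s_not_rat (q : ℚ) : algebraMap ℚ K q ≠ s := by
  intro h
  apply no_rat_sqrt14 q
  have : algebraMap ℚ K (q ^ 2) = algebraMap ℚ K 14 := by
    rw [map_pow, h, hs]; simp
  exact (algebraMap ℚ K).injective this

include hs in
lemma li_one_s : LinearIndependent ℚ ![(1 : K), s] := by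
  rw [LinearIndependent.pair_iff]
  intro a b hab
  by_contra hab'
  have hb : b ≠ 0 := by
    rintro rfl
    simp only [smul_eq_mul, mul_one, zero_smul, add_zero] at hab
    have : a = 0 := by
      have := congrArg (algebraMap ℚ K) (rfl : a = a)
      simpa [Algebra.smul_def] using hab
    tauto
  apply s_not_rat s hs (-a / b)
  have h1 : a • (1 : K) = -(b • s) := by
    have := hab
    rw [add_eq_zero_iff_eq_neg] at this
    exact this
  have h2 : (-a / b) • (1 : K) = s := by
    rw [div_eq_inv_mul, ← smul_smul, neg_smul, h1, neg_neg, smul_smul,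
      inv_mul_cancel₀ hb, one_smul]
  rw [Algebra.algebraMap_eq_smul_one]
  exact h2

end Quad
section Quad2
variable {K : Type*} [Field K] [NumberField K]

noncomputable def quadBasis (s : K) (hs : s ^ 2 = 14) (hdeg : Module.finrank ℚ K = 2) :
    Module.Basis (Fin 2) ℚ K :=
  basisOfLinearIndependentOfCardEqFinrank (li_one_s s hs) (by simpa using hdeg.symm)

variable (s : K) (hs : s ^ 2 = 14) (hdeg : Module.finrank ℚ K = 2)

lemma quadBasis_coe : ⇑(quadBasis s hs hdeg) = ![1, s] :=
  coe_basisOfLinearIndependentOfCardEqFinrank _ _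

include hs hdeg in
lemma quadBasis_repr (a b : ℚ) (i : Fin 2) :
    (quadBasis s hs hdeg).repr (algebraMap ℚ K a + algebraMap ℚ K b * s) i = ![a, b] i := by
  set B := quadBasis s hs hdeg with hB
  have h0 : B 0 = 1 := by rw [quadBasis_coe]; rfl
  have h1 : B 1 = s := by rw [quadBasis_coe]; rfl
  have hx : algebraMap ℚ K a + algebraMap ℚ K b * s = a • B 0 + b • B 1 := by
    rw [h0, h1, Algebra.smul_def, Algebra.smul_def, mul_one]
  rw [hx, map_add, map_smul, map_smul, B.repr_self, B.repr_self]
  fin_cases i <;> simp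

include hs hdeg in
lemma exists_rat_repr (x : K) : ∃ a b : ℚ, x = algebraMap ℚ K a + algebraMap ℚ K b * s := by
  set B := quadBasis s hs hdeg with hB
  have h0 : B 0 = 1 := by rw [quadBasis_coe]; rfl
  have h1 : B 1 = s := by rw [quadBasis_coe]; rfl
  refine ⟨B.repr x 0, B.repr x 1, ?_⟩
  have := B.sum_repr x
  rw [Fin.sum_univ_two, h0, h1] at this
  rw [Algebra.smul_def, Algebra.smul_def, mul_one] at this
  exact this.symm

include hs hdeg in
omit hdeg in
lemma mul_s_form (a b : ℚ) :
    (algebraMap ℚ K a + algebraMap ℚ K b * s) * s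
      = algebraMap ℚ K (14 * b) + algebraMap ℚ K a * s := by
  have h14 : s * s = algebraMap ℚ K 14 := by
    rw [← pow_two, hs]; simp
  calc (algebraMap ℚ K a + algebraMap ℚ K b * s) * s
      = algebraMap ℚ K a * s + algebraMap ℚ K b * (s * s) := by ring
    _ = algebraMap ℚ K a * s + algebraMap ℚ K b * algebraMap ℚ K 14 := by rw [h14]
    _ = algebraMap ℚ K (14 * b) + algebraMap ℚ K a * s := by
        rw [← map_mul, mul_comm b 14]; ring

include hs hdeg in
lemma norm_form (a b : ℚ) :
    Algebra.norm ℚ (algebraMap ℚ K a + algebraMap ℚ K b * s) = a ^ 2 - 14 * b ^ 2 := by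
  classical
  set B := quadBasis s hs hdeg with hB
  set x := algebraMap ℚ K a + algebraMap ℚ K b * s with hx
  rw [Algebra.norm_eq_matrix_det B, Matrix.det_fin_two]
  have h0 : B 0 = 1 := by rw [quadBasis_coe]; rfl
  have h1 : B 1 = s := by rw [quadBasis_coe]; rfl
  have e : ∀ i j, Algebra.leftMulMatrix B x i j = B.repr (x * B j) i := fun i j =>
    Algebra.leftMulMatrix_eq_repr_mul B x i j
  rw [e 0 0, e 1 1, e 0 1, e 1 0, h0, h1, mul_one]
  rw [hx, mul_s_form s hs]
  rw [quadBasis_repr s hs hdeg a b 0, quadBasis_repr s hs hdeg a b 1,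
    quadBasis_repr s hs hdeg (14 * b) a 0, quadBasis_repr s hs hdeg (14 * b) a 1]
  simp
  ring

include hs hdeg in
lemma trace_form (a b : ℚ) :
    Algebra.trace ℚ K (algebraMap ℚ K a + algebraMap ℚ K b * s) = 2 * a := by
  classical
  set B := quadBasis s hs hdeg with hB
  set x := algebraMap ℚ K a + algebraMap ℚ K b * s with hx
  rw [Algebra.trace_eq_matrix_trace B, Matrix.trace_fin_two]
  have h0 : B 0 = 1 := by rw [quadBasis_coe]; rfl
  have h1 : B 1 = s := by rw [quadBasis_coe]; rfl
  have e : ∀ i j, Algebra.leftMulMatrix B x i j = B.repr (x * B j) i := fun i j =>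
    Algebra.leftMulMatrix_eq_repr_mul B x i j
  rw [e 0 0, e 1 1, h0, h1, mul_one]
  rw [hx, mul_s_form s hs]
  rw [quadBasis_repr s hs hdeg a b 0, quadBasis_repr s hs hdeg (14 * b) a 1]
  norm_num
  ring

end Quad2
section Quad3
variable {K : Type*} [Field K] [NumberField K]
variable (s : K) (hs : s ^ 2 = 14) (hdeg : Module.finrank ℚ K = 2)

include hs in
lemma s_integral : IsIntegral ℤ s := by
  refine ⟨Polynomial.X ^ 2 - Polynomial.C 14, ?_, ?_⟩
  · apply Polynomial.monic_X_pow_sub_C <;> norm_num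
  · simp [hs]

include hs hdeg in
lemma int_coords (x : 𝓞 K) :
    ∃ a b : ℤ, (x : K) = algebraMap ℚ K (a : ℚ) + algebraMap ℚ K (b : ℚ) * s := by
  obtain ⟨q1, q2, hx⟩ := exists_rat_repr s hs hdeg (x : K)
  set m : ℤ := Algebra.intTrace ℤ (𝓞 K) x with hmdef
  have hm : (m : ℚ) = 2 * q1 := by
    have h := Algebra.algebraMap_intTrace (A := ℤ) (K := ℚ) (L := K) (B := 𝓞 K) x
    rw [show algebraMap (𝓞 K) K x = (x : K) from rfl, hx, trace_form s hs hdeg] at h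
    exact_mod_cast h
  set so : 𝓞 K := ⟨s, s_integral s hs⟩ with hso
  set k : ℤ := Algebra.intTrace ℤ (𝓞 K) (so * x) with hkdef
  have hk : (k : ℚ) = 28 * q2 := by
    have h := Algebra.algebraMap_intTrace (A := ℤ) (K := ℚ) (L := K) (B := 𝓞 K) (so * x)
    have hmul : algebraMap (𝓞 K) K (so * x) = (x : K) * s := by
      rw [map_mul]
      exact mul_comm _ _
    rw [hmul, hx, mul_s_form s hs, trace_form s hs hdeg] at h
    have h' : (k : ℚ) = 2 * (14 * q2) := by exact_mod_cast h
    linarith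
  set n : ℤ := Algebra.norm ℤ x with hndef
  have hn : (n : ℚ) = q1 ^ 2 - 14 * q2 ^ 2 := by
    have h := Algebra.coe_norm_int (K := K) x
    rw [hx, norm_form s hs hdeg] at h
    exact_mod_cast h
  have hq1 : q1 = (m : ℚ) / 2 := by linarith
  have hq2 : q2 = (k : ℚ) / 28 := by linarith
  have key : 14 * m ^ 2 - k ^ 2 = 56 * n := by
    have hq : ((14 * m ^ 2 - k ^ 2 : ℤ) : ℚ) = ((56 * n : ℤ) : ℚ) := by
      push_cast
      rw [hq1, hq2] at hn
      rw [hn]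
      ring
    exact_mod_cast hq
  have hk2 : k ^ 2 = 14 * (m ^ 2 - 4 * n) := by linarith
  have h2k : (2 : ℤ) ∣ k := by
    have := Int.Prime.dvd_pow' (n := k) (k := 2) Nat.prime_two ⟨7 * (m ^ 2 - 4 * n), by push_cast; linarith⟩
    exact_mod_cast this
  have h7k : (7 : ℤ) ∣ k := by
    have := Int.Prime.dvd_pow' (n := k) (k := 2) (by norm_num : Nat.Prime 7) ⟨2 * (m ^ 2 - 4 * n), by push_cast; linarith⟩
    exact_mod_cast this
  obtain ⟨k', hk'⟩ : (14 : ℤ) ∣ k := by omega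
  have e1 : 14 * k' ^ 2 = m ^ 2 - 4 * n := by
    have h196 : k ^ 2 = 196 * k' ^ 2 := by rw [hk']; ring
    linarith
  have h2m : (2 : ℤ) ∣ m := by
    have := Int.Prime.dvd_pow' (n := m) (k := 2) Nat.prime_two ⟨7 * k' ^ 2 + 2 * n, by push_cast; linarith⟩
    exact_mod_cast this
  obtain ⟨m', hm'⟩ := h2m
  have e2 : 2 * m' ^ 2 = 7 * k' ^ 2 + 2 * n := by
    have h4 : m ^ 2 = 4 * m' ^ 2 := by rw [hm']; ring
    linarith
  have h2k' : (2 : ℤ) ∣ k' := by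
    have := Int.Prime.dvd_pow' (n := k') (k := 2) Nat.prime_two ⟨m' ^ 2 - n - 3 * k' ^ 2, by push_cast; linarith⟩
    exact_mod_cast this
  obtain ⟨b, hb⟩ := h2k'
  refine ⟨m', b, ?_⟩
  rw [hx]
  have hq1' : q1 = (m' : ℚ) := by
    rw [hq1, hm']
    push_cast
    ring
  have hq2' : q2 = (b : ℚ) := by
    rw [hq2, hk', hb]
    push_cast
    ring
  rw [hq1', hq2']

end Quad3

lemma natAbs_dvd_int (d : ℕ) (N : ℤ) (h : d ∣ N.natAbs) : (d : ℤ) ∣ N :=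
  Int.dvd_natAbs.mp (Int.natCast_dvd_natCast.mpr h)

lemma odd_sq_mod8 (u : ℤ) (hu : Odd u) : u ^ 2 % 8 = 1 := by
  obtain ⟨i, rfl⟩ := hu
  obtain ⟨e, he⟩ := Int.even_mul_succ_self i
  have key : (2 * i + 1) ^ 2 = 4 * (i * (i + 1)) + 1 := by ring
  rw [key, he]
  omega

lemma normval_mod8 (u w : ℤ) (hu : Odd u) (hw : Odd w) : (u ^ 2 - 14 * w ^ 2) % 8 = 3 := by
  have h1 := odd_sq_mod8 u hu
  have h2 := odd_sq_mod8 w hw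
  omega

lemma three_dvd_nine (u w : ℤ) (h3 : (3 : ℤ) ∣ u ^ 2 - 14 * w ^ 2) :
    (9 : ℤ) ∣ u ^ 2 - 14 * w ^ 2 := by
  have hmod : ((u : ZMod 3) ^ 2 - 14 * (w : ZMod 3) ^ 2) = 0 := by
    have : (((u ^ 2 - 14 * w ^ 2 : ℤ)) : ZMod 3) = 0 := by
      rw [ZMod.intCast_zmod_eq_zero_iff_dvd]
      exact_mod_cast h3
    push_cast at this
    exact this
  have hu0 : (u : ZMod 3) = 0 :=
    (by decide : ∀ a b : ZMod 3, a ^ 2 - 14 * b ^ 2 = 0 → a = 0) _ _ hmod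
  have hw0 : (w : ZMod 3) = 0 :=
    (by decide : ∀ a b : ZMod 3, a ^ 2 - 14 * b ^ 2 = 0 → b = 0) _ _ hmod
  have hu3 : (3 : ℤ) ∣ u := by exact_mod_cast (ZMod.intCast_zmod_eq_zero_iff_dvd u 3).mp hu0
  have hw3 : (3 : ℤ) ∣ w := by exact_mod_cast (ZMod.intCast_zmod_eq_zero_iff_dvd w 3).mp hw0
  obtain ⟨u', rfl⟩ := hu3
  obtain ⟨w', rfl⟩ := hw3
  exact ⟨u' ^ 2 - 14 * w' ^ 2, by ring⟩

lemma pow_mod8 (p : ℕ) (hp : p % 8 = 1 ∨ p % 8 = 7) (j : ℕ) :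
    p ^ j % 8 = 1 ∨ p ^ j % 8 = 7 := by
  induction j with
  | zero => left; norm_num
  | succ j ih =>
    rw [pow_succ, Nat.mul_mod]
    rcases ih with h | h <;> rcases hp with h' | h' <;> rw [h, h'] <;> norm_num

lemma core_ge_five (p n C : ℕ) (u w : ℤ) (hp : p.Prime) (hmod : p % 8 = 1 ∨ p % 8 = 7)
    (habs : (u ^ 2 - 14 * w ^ 2).natAbs = p ^ n * C) (hu : Odd u) (hw : Odd w) : 5 ≤ C := by
  set N : ℤ := u ^ 2 - 14 * w ^ 2 with hN
  have h8 : N % 8 = 3 := normval_mod8 u w hu hw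
  have hNne : N ≠ 0 := by omega
  have hCne : C ≠ 0 := by
    rintro rfl
    rw [Nat.mul_zero] at habs
    exact hNne (Int.natAbs_eq_zero.mp habs)
  have hNodd : ¬ (2 : ℤ) ∣ N := by omega
  have hCodd : ¬ 2 ∣ C := by
    intro h2
    refine hNodd (natAbs_dvd_int 2 N ?_)
    rw [habs]
    exact Dvd.dvd.mul_left h2 _
  have hC1 : C ≠ 1 := by
    rintro rfl
    rw [Nat.mul_one] at habs
    have hpow := pow_mod8 p hmod n
    rcases Int.natAbs_eq N with h | h <;> rw [habs] at h <;> omega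
  have hC3 : C ≠ 3 := by
    rintro rfl
    have h3N : (3 : ℤ) ∣ N := natAbs_dvd_int 3 N ⟨p ^ n, by omega⟩
    have h9N : (9 : ℤ) ∣ N := three_dvd_nine u w h3N
    have h9abs : 9 ∣ N.natAbs := by
      have := Int.natAbs_dvd_natAbs.mpr h9N
      simpa using this
    rw [habs] at h9abs
    have h3pn : (3 : ℕ) ∣ p ^ n := by omega
    have h3p := Nat.Prime.dvd_of_dvd_pow (by norm_num : Nat.Prime 3) h3pn
    have : p = 3 := ((Nat.prime_dvd_prime_iff_eq (by norm_num) hp).mp h3p).symm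
    omega
  omega

set_option maxHeartbeats 1000000 in
/-- For `K = ℚ(√14)` and a prime ideal `𝔭` whose norm is a prime `p ≡ ±1 (mod 8)`,
the weighted norm `f_{𝔭,c}` is never a Euclidean function on `𝓞 K`:  `w(𝔭) = ∅`. -/
theorem euclidean_window_empty_sqrt14 {K : Type*} [Field K] [NumberField K]
    (sqrt14 : K) (hs : sqrt14 ^ 2 = 14) (hdeg : Module.finrank ℚ K = 2)
    (P : Ideal (𝓞 K)) (hP : P.IsPrime) (h0 : P ≠ ⊥)
    (hnorm : (Ideal.absNorm P).Prime)
    (hmod : Ideal.absNorm P % 8 = 1 ∨ Ideal.absNorm P % 8 = 7)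
    (c : ℝ) (hc : 0 < c) :
    ¬ IsEuclideanFunction (weightedNorm ⟨P, hP, h0⟩ c) := by
  intro hE
  set v : HeightOneSpectrum (𝓞 K) := ⟨P, hP, h0⟩ with hv
  have hvas : v.asIdeal = P := rfl
  set p : ℕ := Ideal.absNorm P with hpdef
  have hp2 : 2 ≤ p := hnorm.two_le
  have hppos : (0 : ℝ) < (p : ℝ) := by exact_mod_cast (by omega : 0 < p)
  rcases le_or_gt 1 c with hc1 | hc1
  · -- case c ≥ 1 : use a = 1 + √14, b = 2
    set so : 𝓞 K := ⟨sqrt14, s_integral sqrt14 hs⟩ with hso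
    have h2ne : (2 : 𝓞 K) ≠ 0 := by
      intro h
      have h2 : ((2 : 𝓞 K) : K) = 0 := by rw [h]; simp
      norm_num at h2
    obtain ⟨q, hq⟩ := hE (1 + so) 2 h2ne
    set r : 𝓞 K := (1 + so) - 2 * q with hr
    have hrK : ((1 + so : 𝓞 K) : K) - ((2 : 𝓞 K) : K) * (q : K) = (r : K) := by
      push_cast [hr]
      ring
    obtain ⟨A, Bq, hAB⟩ := int_coords sqrt14 hs hdeg q
    set u : ℤ := 1 - 2 * A with hu
    set w : ℤ := 1 - 2 * Bq with hw
    have hrcoord : (r : K) = algebraMap ℚ K ((u : ℤ) : ℚ) + algebraMap ℚ K ((w : ℤ) : ℚ) * sqrt14 := by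
      have h1 : (r : K) = algebraMap (𝓞 K) K ((1 + so) - 2 * q) := by rw [hr]
      rw [h1, map_sub, map_add, map_mul, map_one, map_ofNat]
      have hsoK : algebraMap (𝓞 K) K so = sqrt14 := rfl
      have hqK : algebraMap (𝓞 K) K q
          = algebraMap ℚ K ((A : ℤ) : ℚ) + algebraMap ℚ K ((Bq : ℤ) : ℚ) * sqrt14 := hAB
      rw [hsoK, hqK]
      simp only [eq_ratCast]
      push_cast
      rw [hu, hw]
      push_cast
      ring
    set NZ : ℤ := u ^ 2 - 14 * w ^ 2 with hNZ
    have hnorm_r : Algebra.norm ℚ (r : K) = ((NZ : ℤ) : ℚ) := by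
      rw [hrcoord, norm_form sqrt14 hs hdeg, hNZ]
      push_cast
      ring
    have hNmod : NZ % 8 = 3 := normval_mod8 u w ⟨-A, by omega⟩ ⟨-Bq, by omega⟩
    have hr0 : r ≠ 0 := by
      intro h
      rw [h] at hnorm_r
      have hz : ((0 : 𝓞 K) : K) = 0 := by push_cast; rfl
      rw [hz, Algebra.norm_zero] at hnorm_r
      have : NZ = 0 := by exact_mod_cast hnorm_r.symm
      omega
    obtain ⟨n, hval, hdvd, -⟩ := exists_adicVal_nat v r hr0
    have habs : Ideal.absNorm (Ideal.span {r}) = NZ.natAbs := by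
      rw [Ideal.absNorm_span_singleton]
      congr 1
      have h1 : ((Algebra.norm ℤ r : ℤ) : ℚ) = ((NZ : ℤ) : ℚ) := by
        rw [Algebra.coe_norm_int, hnorm_r]
      exact_mod_cast h1
    have hpn : p ^ n ∣ NZ.natAbs := by
      have hd := map_dvd Ideal.absNorm hdvd
      rw [map_pow, hvas, ← hpdef, habs] at hd
      exact hd
    obtain ⟨C, hC⟩ := hpn
    have hC5 : 5 ≤ C := core_ge_five p n C u w hnorm hmod (by rw [← hNZ, hC]) ⟨-A, by omega⟩ ⟨-Bq, by omega⟩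
    -- value of f at r
    have hfr : weightedNorm v c (r : K) = (NZ.natAbs : ℝ) * (c / (p : ℝ)) ^ n := by
      have := weightedNorm_coe v c r hr0 n hval
      rw [this, habs, hvas, ← hpdef]
    -- value of f at 2
    have habs2 : Ideal.absNorm (Ideal.span {(2 : 𝓞 K)}) = 4 := by
      rw [Ideal.absNorm_span_singleton]
      have h1 : ((Algebra.norm ℤ (2 : 𝓞 K) : ℤ) : ℚ) = 4 := by
        rw [Algebra.coe_norm_int]
        have h2K : ((2 : 𝓞 K) : K) = algebraMap ℚ K 2 := by
          rw [show algebraMap ℚ K 2 = (2 : K) from map_ofNat _ 2]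
          exact map_ofNat (algebraMap (𝓞 K) K) 2
        rw [h2K, Algebra.norm_algebraMap, hdeg]
        norm_num
      have h2 : (Algebra.norm ℤ (2 : 𝓞 K) : ℤ) = 4 := by exact_mod_cast h1
      rw [h2]
      rfl
    have hv2 : adicVal v ((2 : 𝓞 K) : K) = 0 := by
      apply adicVal_eq_of_dvd v 2 h2ne 0 (by simp)
      rw [pow_one]
      intro hd
      have hdd := map_dvd Ideal.absNorm hd
      rw [hvas, ← hpdef, habs2] at hdd
      have := Nat.le_of_dvd (by norm_num) hdd
      interval_cases p <;> omega
    have hf2 : weightedNorm v c ((2 : 𝓞 K) : K) = 4 := by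
      rw [weightedNorm_coe v c 2 h2ne 0 hv2, habs2]
      norm_num
    rw [hrK, hf2] at hq
    have hge : (5 : ℝ) ≤ weightedNorm v c (r : K) := by
      rw [hfr, hC]
      push_cast
      have hcp : ((p : ℝ) ^ n) * (c / (p : ℝ)) ^ n = c ^ n := by
        rw [← mul_pow, mul_div_cancel₀ c (ne_of_gt hppos)]
      have hcn : (1 : ℝ) ≤ c ^ n := one_le_pow₀ hc1
      have hC5' : (5 : ℝ) ≤ (C : ℝ) := by exact_mod_cast hC5
      calc (5 : ℝ) ≤ (C : ℝ) * c ^ n := by nlinarith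
        _ = (p : ℝ) ^ n * (C : ℝ) * (c / (p : ℝ)) ^ n := by
            rw [mul_comm ((p:ℝ)^n) (C:ℝ), mul_assoc, hcp]
    linarith
  · -- case c < 1 : use a = 1, b = generator of P ^ (class number)
    set h : ℕ := Fintype.card (ClassGroup (𝓞 K)) with hh
    have hh1 : 0 < h := Fintype.card_pos
    have hPmem : P ∈ (Ideal (𝓞 K))⁰ := mem_nonZeroDivisors_of_ne_zero h0
    have hmem2 : P ^ h ∈ (Ideal (𝓞 K))⁰ := pow_mem hPmem h
    have hone : ClassGroup.mk0 ⟨P ^ h, hmem2⟩ = 1 := by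
      rw [show (⟨P ^ h, hmem2⟩ : (Ideal (𝓞 K))⁰) = ⟨P, hPmem⟩ ^ h from Subtype.ext (by simp),
        map_pow]
      exact pow_card_eq_one
    obtain ⟨β, hβ⟩ := ((ClassGroup.mk0_eq_one_iff hmem2).mp hone).principal
    have hβspan : Ideal.span {β} = P ^ h := hβ.symm
    have habsh : Ideal.absNorm (Ideal.span {β}) = p ^ h := by
      rw [hβspan, map_pow, ← hpdef]
    have hβ0 : β ≠ 0 := by
      rintro rfl
      rw [Ideal.span_singleton_eq_bot.mpr rfl] at habsh
      simp only [Ideal.absNorm_bot] at habsh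
      have : 0 < p ^ h := Nat.pow_pos (n := h) (by omega)
      omega
    have hvβ : adicVal v (β : K) = h := by
      apply adicVal_eq_of_dvd v β hβ0 h
      · rw [hvas, hβspan]
      · rw [hvas, hβspan]
        intro hd
        have hdd := map_dvd Ideal.absNorm hd
        rw [map_pow, map_pow, ← hpdef] at hdd
        have hle := (Nat.pow_dvd_pow_iff_le_right (by omega : 1 < p)).mp hdd
        omega
    obtain ⟨q, hq⟩ := hE 1 β hβ0
    set r : 𝓞 K := 1 - β * q with hr
    have hrK : ((1 : 𝓞 K) : K) - (β : K) * (q : K) = (r : K) := by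
      push_cast [hr]
      ring
    have hβP : β ∈ P := by
      have h1 : Ideal.span {β} ≤ P := by
        rw [hβspan]
        exact Ideal.pow_le_self (by omega)
      exact h1 (Ideal.mem_span_singleton_self β)
    have hrP : r ∉ P := by
      intro hrmem
      have h1 : (1 : 𝓞 K) ∈ P := by
        have : (1 : 𝓞 K) = r + β * q := by rw [hr]; ring
        rw [this]
        exact P.add_mem hrmem (Ideal.mul_mem_right q P hβP)
      exact hP.ne_top ((Ideal.eq_top_iff_one P).mpr h1)
    have hr0 : r ≠ 0 := by
      intro h'
      exact hrP (h' ▸ P.zero_mem)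
    have hvr : adicVal v (r : K) = 0 := by
      apply adicVal_eq_of_dvd v r hr0 0 (by simp)
      rw [pow_one, hvas, Ideal.dvd_span_singleton]
      exact hrP
    have hfr : weightedNorm v c (r : K) = (Ideal.absNorm (Ideal.span {r}) : ℝ) := by
      rw [weightedNorm_coe v c r hr0 0 hvr]
      norm_num
    have hfβ : weightedNorm v c (β : K) = c ^ h := by
      rw [weightedNorm_coe v c β hβ0 h hvβ, habsh, hvas, ← hpdef]
      push_cast
      rw [← mul_pow, mul_div_cancel₀ c (ne_of_gt hppos)]
    have h1le : (1 : ℝ) ≤ (Ideal.absNorm (Ideal.span {r}) : ℝ) := by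
      have : Ideal.absNorm (Ideal.span {r}) ≠ 0 := by
        simp only [ne_eq, Ideal.absNorm_eq_zero_iff, Ideal.span_singleton_eq_bot]
        exact hr0
      exact_mod_cast Nat.one_le_iff_ne_zero.mpr this
    have hch : c ^ h < 1 := pow_lt_one₀ (le_of_lt hc) hc1 (by omega)
    rw [hrK, hfβ] at hq
    rw [hfr] at hq
    linarith
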